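/- arXiv:1908.04056 — 3 statements merged into one kernel-verified Lean document; each statement's English description precedes it below -/
import Mathlib

section
/- For every Nyldon word x over A and every proper nonempty suffix s of x such that s is Nyldon, one has s <_lex x. -/
/-!
Common definitions: words over a totally ordered alphabet, lexicographic order,
Nyldon and Lyndon words, Nyldon-like sets, right Hall sets, and (circular) codes.
-/

/-- Strict lexicographic order on words: `u <_lex v` iff `u` is a proper prefix of `v`,
or `u` and `v` first differ at a position where `u` has the smaller letter. -/
def LexLt {A : Type*} [LinearOrder A] (u v : List A) : Prop :=
  List.Lex (· < ·) u v

/-- Nonstrict lexicographic order on words. -/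
def LexLe {A : Type*} [LinearOrder A] (u v : List A) : Prop :=
  u = v ∨ LexLt u v

theorem length_le_length_flatten_of_ne_nil {A : Type*} {s : List (List A)}
    (h : ∀ g ∈ s, g ≠ []) : s.length ≤ s.flatten.length := by
  induction s with
  | nil => simp
  | cons a t ih =>
    simp only [List.flatten_cons, List.length_append, List.length_cons]
    have ha : 1 ≤ a.length := List.length_pos_iff.mpr (h a (by simp))
    have ht := ih (fun g hg => h g (List.mem_cons_of_mem _ hg))
    omega

theorem length_lt_length_flatten {A : Type*} {f : List A} {fs : List (List A)}
    (h2 : 2 ≤ fs.length) (hne : ∀ g ∈ fs, g ≠ []) (hf : f ∈ fs) :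
    f.length < fs.flatten.length := by
  obtain ⟨s, t, rfl⟩ := List.append_of_mem hf
  have hs : s.length ≤ s.flatten.length :=
    length_le_length_flatten_of_ne_nil (fun g hg => hne g (by simp [hg]))
  have ht : t.length ≤ t.flatten.length :=
    length_le_length_flatten_of_ne_nil (fun g hg => hne g (by simp [hg]))
  have hlen : 2 ≤ s.length + t.length + 1 := by
    simp only [List.length_append, List.length_cons] at h2
    omega
  have hj : (s ++ f :: t).flatten.length
      = s.flatten.length + f.length + t.flatten.length := by
    simp [List.flatten_append]
    omega
  omega

/-- A nonempty word is Nyldon if it admits no factorization into at least two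
lexicographically nondecreasing Nyldon words. (Single letters are Nyldon vacuously,
since they admit no factorization into at least two nonempty words at all.) -/
def IsNyldon {A : Type*} [LinearOrder A] (w : List A) : Prop :=
  w ≠ [] ∧ ∀ fs : List (List A), 2 ≤ fs.length → (∀ g ∈ fs, g ≠ []) →
    fs.flatten = w → (∀ f ∈ fs, IsNyldon f) → fs.Chain' LexLe → False
termination_by w.length
decreasing_by
  rename_i h2 hne hjoin hf
  subst hjoin
  exact length_lt_length_flatten h2 hne hf

/-- A nonempty word is Lyndon if it admits no factorization into at least two
lexicographically nonincreasing Lyndon words. -/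
def IsLyndon {A : Type*} [LinearOrder A] (w : List A) : Prop :=
  w ≠ [] ∧ ∀ fs : List (List A), 2 ≤ fs.length → (∀ g ∈ fs, g ≠ []) →
    fs.flatten = w → (∀ f ∈ fs, IsLyndon f) →
    fs.Chain' (fun u v => LexLe v u) → False
termination_by w.length
decreasing_by
  rename_i h2 hne hjoin hf
  subst hjoin
  exact length_lt_length_flatten h2 hne hf

/-- `fs` is a Nyldon factorization of `w`: a nondecreasing (under `≤_lex`) sequence
of Nyldon words whose concatenation is `w`. -/
def IsNyldonFactorization {A : Type*} [LinearOrder A] (fs : List (List A)) (w : List A) :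
    Prop :=
  (∀ f ∈ fs, IsNyldon f) ∧ fs.Chain' LexLe ∧ fs.flatten = w

/-- The `j`-th power `u^j` of a word `u`: the concatenation of `j` copies of `u`. -/
def wordPow {A : Type*} (u : List A) (j : ℕ) : List A :=
  (List.replicate j u).flatten

/-- A word is primitive if it is not a power `u^j` of a word `u` with `j ≥ 2`. -/
def Primitive {A : Type*} (w : List A) : Prop :=
  ∀ (u : List A) (j : ℕ), 2 ≤ j → w ≠ wordPow u j

/-- A Nyldon-like set over the alphabet `A`: a set `Mem` of nonempty words together with a
strict total order `lt` on it, such that every single letter is in the set, a word of length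
at least `2` is in the set iff it admits no factorization into at least two nondecreasing
words of the set, and `f ≺ fg` whenever `f`, `g`, `fg` are all in the set. -/
structure NyldonLike (A : Type*) where
  /-- membership in `G` -/
  Mem : List A → Prop
  /-- the strict total order `≺` on `G` -/
  lt : List A → List A → Prop
  mem_ne_nil : ∀ w, Mem w → w ≠ []
  lt_irrefl : ∀ u, Mem u → ¬ lt u u
  lt_trans : ∀ u v x, Mem u → Mem v → Mem x → lt u v → lt v x → lt u x
  lt_total : ∀ u v, Mem u → Mem v → lt u v ∨ u = v ∨ lt v u
  singleton_mem : ∀ a : A, Mem [a]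
  mem_iff : ∀ w : List A, 2 ≤ w.length →
    (Mem w ↔ ¬ ∃ fs : List (List A), 2 ≤ fs.length ∧ (∀ f ∈ fs, Mem f) ∧
      fs.Chain' (fun u v => u = v ∨ lt u v) ∧ fs.flatten = w)
  append_lt : ∀ f g, Mem f → Mem g → Mem (f ++ g) → lt f (f ++ g)

namespace NyldonLike

variable {A : Type*}

/-- The nonstrict order `⪯` associated to a Nyldon-like set. -/
def le (G : NyldonLike A) (u v : List A) : Prop :=
  u = v ∨ G.lt u v

/-- `fs` is a `G`-factorization of `w`: a nondecreasing (under `⪯`) sequence of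
`G`-words whose concatenation is `w`. -/
def IsFactorization (G : NyldonLike A) (fs : List (List A)) (w : List A) : Prop :=
  (∀ f ∈ fs, G.Mem f) ∧ fs.Chain' G.le ∧ fs.flatten = w

end NyldonLike

/-- A factorization `fs` of a word written as the concatenation of `blocks` preserves the
blocks if each factor is the concatenation of a (nonempty) consecutive run of whole blocks. -/
def PreservesBlocks {A : Type*} (blocks fs : List (List A)) : Prop :=
  ∃ P : List (List (List A)), (∀ p ∈ P, p ≠ []) ∧ P.flatten = blocks ∧
    P.map List.flatten = fs

/-- A right Hall set over the alphabet `A`: a set `Mem` of nonempty words with a strict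
total order `lt` such that every nonempty word has a unique nondecreasing factorization
into words of the set, and `fg ≻ g` whenever `f`, `g`, `fg` are all in the set. -/
structure RightHallSet (A : Type*) where
  /-- membership in `H` -/
  Mem : List A → Prop
  /-- the strict total order `≺` on `H` -/
  lt : List A → List A → Prop
  mem_ne_nil : ∀ w, Mem w → w ≠ []
  lt_irrefl : ∀ u, Mem u → ¬ lt u u
  lt_trans : ∀ u v x, Mem u → Mem v → Mem x → lt u v → lt v x → lt u x
  lt_total : ∀ u v, Mem u → Mem v → lt u v ∨ u = v ∨ lt v u
  unique_factorization : ∀ w : List A, w ≠ [] →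
    ∃! fs : List (List A), (∀ f ∈ fs, Mem f) ∧
      fs.Chain' (fun u v => u = v ∨ lt u v) ∧ fs.flatten = w
  append_gt : ∀ f g, Mem f → Mem g → Mem (f ++ g) → lt g (f ++ g)

/-- A set `F` of words is a code if any two sequences of words of `F` with equal
concatenations are equal. -/
def IsCode {A : Type*} (F : List A → Prop) : Prop :=
  ∀ l₁ l₂ : List (List A), (∀ f ∈ l₁, F f) → (∀ f ∈ l₂, F f) →
    l₁.flatten = l₂.flatten → l₁ = l₂

/-- `w ∈ F*`: `w` is a concatenation of (zero or more) words of `F`. -/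
def CodeStar {A : Type*} (F : List A → Prop) (w : List A) : Prop :=
  ∃ l : List (List A), (∀ f ∈ l, F f) ∧ l.flatten = w

/-- A set `F` of words is a circular code if it is a code and whenever
`uv ∈ F*` and `vu ∈ F*`, also `u ∈ F*` and `v ∈ F*`. -/
def IsCircularCode {A : Type*} (F : List A → Prop) : Prop :=
  IsCode F ∧ ∀ u v : List A, CodeStar F (u ++ v) → CodeStar F (v ++ u) → CodeStar F u ∧ CodeStar F v

section Aux
variable {A : Type*} [LinearOrder A]

theorem isNyldon_iff (w : List A) : IsNyldon w ↔ w ≠ [] ∧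
    ∀ fs : List (List A), 2 ≤ fs.length → (∀ g ∈ fs, g ≠ []) →
    fs.flatten = w → (∀ f ∈ fs, IsNyldon f) → fs.Chain' LexLe → False := by
  rw [IsNyldon]

theorem IsNyldonAux.ne_nil {w : List A} (h : IsNyldon w) : w ≠ [] :=
  ((isNyldon_iff w).mp h).1

theorem IsNyldonAux.no_fact {w : List A} (h : IsNyldon w) :
    ∀ fs : List (List A), 2 ≤ fs.length →
    fs.flatten = w → (∀ f ∈ fs, IsNyldon f) → fs.Chain' LexLe → False :=
  fun fs h2 hflat hnyl hch => ((isNyldon_iff w).mp h).2 fs h2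
    (fun g hg => IsNyldonAux.ne_nil (hnyl g hg)) hflat hnyl hch

theorem not_nyldon_fact {u : List A} (hune : u ≠ []) (hu : ¬ IsNyldon u) :
    ∃ vs : List (List A), 2 ≤ vs.length ∧ (∀ f ∈ vs, IsNyldon f) ∧
      vs.Chain' LexLe ∧ vs.flatten = u := by
  rw [isNyldon_iff] at hu
  push_neg at hu
  obtain ⟨vs, h2, hne, hflat, hnyl, hch⟩ := hu hune
  exact ⟨vs, h2, hnyl, hch.1, hflat⟩

theorem exists_nf {p : List A} (hp : p ≠ []) :
    ∃ fs : List (List A), fs ≠ [] ∧ (∀ f ∈ fs, IsNyldon f) ∧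
      fs.Chain' LexLe ∧ fs.flatten = p := by
  by_cases h : IsNyldon p
  · exact ⟨[p], by simp, by simpa using h, List.isChain_singleton _, by simp⟩
  · rw [isNyldon_iff] at h
    push_neg at h
    obtain ⟨fs, h2, hne, hflat, hnyl, hch⟩ := h hp
    exact ⟨fs, by rintro rfl; simp at h2, hnyl, hch.1, hflat⟩

theorem lexLt_trans {u v w : List A} (h1 : LexLt u v) (h2 : LexLt v w) : LexLt u w :=
  List.lex_trans (fun h1 h2 => lt_trans h1 h2) h1 h2

theorem lexLt_trichotomy (u v : List A) : LexLt u v ∨ u = v ∨ LexLt v u :=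
  trichotomous_of (List.Lex ((· < ·) : A → A → Prop)) u v

theorem lexLt_of_lexLt_of_lexLe {u v w : List A} (h1 : LexLt u v) (h2 : LexLe v w) :
    LexLt u w := by
  rcases h2 with rfl | h2
  · exact h1
  · exact lexLt_trans h1 h2

theorem lexLt_append (u v : List A) (h : LexLt u v) (z : List A) : LexLt u (v ++ z) :=
  List.Lex.append_right _ z h

theorem suffix_of_suffix_length_le {l₁ l₂ l₃ : List A} (h1 : l₁ <:+ l₃) (h2 : l₂ <:+ l₃)
    (h : l₁.length ≤ l₂.length) : l₁ <:+ l₂ := by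
  rw [← List.reverse_prefix] at h1 h2 ⊢
  rw [List.prefix_iff_eq_take] at h1 h2 ⊢
  rw [h1, h2, List.take_take]
  simp [min_eq_left, h]

end Aux

section Main
variable {A : Type*} [LinearOrder A]

/-- If every Nyldon word of length `< N` is lex-greater than its proper Nyldon suffixes,
then for any nondecreasing Nyldon factorization `gs ++ [v]` of a word of length `≤ N`,
any Nyldon suffix `s` of that word satisfies `s.length ≤ v.length`. -/
theorem last_longest (N : ℕ)
    (HS : ∀ w s : List A, w.length < N → IsNyldon w → IsNyldon s → s <:+ w → s ≠ w →
      LexLt s w) :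
    ∀ (gs : List (List A)) (v s : List A),
      (∀ f ∈ gs ++ [v], IsNyldon f) → (gs ++ [v]).Chain' LexLe →
      IsNyldon s → s <:+ (gs ++ [v]).flatten → (gs ++ [v]).flatten.length ≤ N →
      s.length ≤ v.length := by
  intro gs
  induction gs with
  | nil =>
    intro v s _ _ _ hsuf _
    simpa using hsuf.length_le
  | cons f gs' ih =>
    intro v s hnyl hch hs hsuf hN
    set F' : List A := (gs' ++ [v]).flatten with hF'
    have hflat : ((f :: gs') ++ [v]).flatten = f ++ F' := by simp [hF']
    rw [hflat] at hsuf hN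
    have hFsuf : F' <:+ f ++ F' := List.suffix_append f F'
    have hvne : v ≠ [] := IsNyldonAux.ne_nil (hnyl v (by simp))
    have hfne : f ≠ [] := IsNyldonAux.ne_nil (hnyl f (by simp))
    have hF'len : 1 ≤ F'.length := by
      have : v.length ≤ F'.length := (by simp [hF'] : v <:+ F').length_le
      have := List.length_pos_iff.mpr hvne
      omega
    by_cases h1 : s.length ≤ F'.length
    · -- s is a suffix of F'
      have hsF : s <:+ F' := suffix_of_suffix_length_le hsuf hFsuf h1
      exact ih v s (fun g hg => hnyl g (by simp at hg ⊢; tauto))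
        (hch.right_of_append (l₁ := [f])) hs hsF
        (by rw [← hF']; simp only [List.length_append] at hN; omega)
    · push_neg at h1
      by_cases h2 : s.length = (f ++ F').length
      · -- s equals the whole word: contradicts s Nyldon
        have : s = f ++ F' := hsuf.eq_of_length h2
        subst this
        exact absurd (IsNyldonAux.no_fact hs ((f :: gs') ++ [v]) (by simp)
          hflat hnyl hch) not_false
      · -- s = r ++ F' with r a proper nonempty suffix of f
        have hslen : s.length < f.length + F'.length := by
          have h3 := hsuf.length_le
          simp only [List.length_append] at h3 h2
          omega
        obtain ⟨q, hq⟩ := hsuf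
        have hqf : q <+: f := by
          have hq1 : q <+: f ++ F' := ⟨s, hq⟩
          have hqlen : q.length ≤ f.length := by
            have := congrArg List.length hq
            simp at this
            omega
          exact (List.isPrefix_append_of_length hqlen).mp hq1
        obtain ⟨r, hr⟩ := hqf
        have hqne : q ≠ [] := by
          rintro rfl
          simp only [List.nil_append] at hq
          exact h2 (by rw [hq])
        have hsr : s = r ++ F' := by
          rw [← hr] at hq
          rw [List.append_assoc] at hq
          exact List.append_cancel_left hq
        have hrne : r ≠ [] := by
          rintro rfl
          rw [hsr] at h1
          simp at h1
        have hrf : r <:+ f := ⟨q, hr⟩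
        have hrlt : r.length < f.length := by
          have := congrArg List.length hr
          have := List.length_pos_iff.mpr hqne
          simp at *
          omega
        obtain ⟨rs, hrs_ne, hrs_nyl, hrs_ch, hrs_flat⟩ := exists_nf hrne
        obtain ⟨rs', rm, hrs⟩ := (List.eq_nil_or_concat' rs).resolve_left hrs_ne
        have hg : ∃ g G', gs' ++ [v] = g :: G' := by
          cases gs' with
          | nil => exact ⟨v, [], rfl⟩
          | cons a t => exact ⟨a, t ++ [v], rfl⟩
        obtain ⟨g, G', hgG⟩ := hg
        by_cases hle : LexLe rm g
        · -- s admits a factorization: contradiction with s Nyldon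
          exfalso
          apply IsNyldonAux.no_fact hs (rs ++ (gs' ++ [v]))
          · rw [hrs, hgG]; simp; omega
          · rw [List.flatten_append, hrs_flat, ← hF', ← hsr]
          · intro x hx
            rcases List.mem_append.mp hx with h | h
            · exact hrs_nyl x h
            · exact hnyl x (by simp at h ⊢; tauto)
          · have hchG : List.Chain' LexLe (gs' ++ [v]) := hch.right_of_append (l₁ := [f])
            apply List.IsChain.append hrs_ch hchG
            intro x hx y hy
            rw [hrs, List.getLast?_concat] at hx
            rw [hgG] at hy
            simp only [List.head?_cons, Option.mem_def, Option.some.injEq] at hx hy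
            rw [← hx, ← hy]
            exact hle
        · -- rm is a proper Nyldon suffix of f, so rm < f ≤ g : contradiction
          exfalso
          apply hle
          have hrm_mem : rm ∈ rs := by rw [hrs]; simp
          have hrm_nyl : IsNyldon rm := hrs_nyl rm hrm_mem
          have hrm_suf_r : rm <:+ r := by
            rw [← hrs_flat, hrs]
            exact ⟨rs'.flatten, by simp⟩
          have hrm_suf_f : rm <:+ f := hrm_suf_r.trans hrf
          have hrm_ne_f : rm ≠ f := by
            intro h
            have := hrm_suf_r.length_le
            rw [h] at this
            omega
          have hfN : f.length < N := by
            simp at hN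
            omega
          have hrmf : LexLt rm f := HS f rm hfN (hnyl f (by simp)) hrm_nyl hrm_suf_f hrm_ne_f
          have hfg : LexLe f g := by
            have : List.Chain' LexLe (f :: g :: G') := by rw [← hgG]; exact hch
            exact (List.isChain_cons_cons.mp this).1
          exact Or.inr (lexLt_of_lexLt_of_lexLe hrmf hfg)

end Main

section Main2
variable {A : Type*} [LinearOrder A]

theorem nyldon_suffix (n : ℕ) : ∀ w s : List A, w.length ≤ n → IsNyldon w → IsNyldon s →
    s <:+ w → s ≠ w → LexLt s w := by
  induction n using Nat.strong_induction_on with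
  | _ n IHn =>
  have HS : ∀ w s : List A, w.length < n → IsNyldon w → IsNyldon s → s <:+ w → s ≠ w →
      LexLt s w := fun w s hlt => IHn w.length hlt w s le_rfl
  have inner : ∀ d, ∀ w s : List A, w.length ≤ n → w.length - s.length ≤ d →
      IsNyldon w → IsNyldon s → s <:+ w → s ≠ w → LexLt s w := by
    intro d
    induction d using Nat.strong_induction_on with
    | _ d IHd =>
    intro w s hwn hd hw hs hsuf hne
    obtain ⟨p, hp⟩ := hsuf
    have hpne : p ≠ [] := by rintro rfl; exact hne (by simpa using hp)
    have hslt : s.length < w.length := by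
      have h1 := congrArg List.length hp
      simp only [List.length_append] at h1
      have h2 := List.length_pos_iff.mpr hpne
      omega
    obtain ⟨fs, hfs_ne, hfs_nyl, hfs_ch, hfs_flat⟩ := exists_nf hpne
    obtain ⟨fs', pk, hfs⟩ := (List.eq_nil_or_concat' fs).resolve_left hfs_ne
    have hpk_nyl : IsNyldon pk := hfs_nyl pk (by rw [hfs]; simp)
    have hpk_ne : pk ≠ [] := IsNyldonAux.ne_nil hpk_nyl
    by_cases hle : LexLe pk s
    · exfalso
      apply IsNyldonAux.no_fact hw (fs ++ [s])
      · rw [hfs]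
        simp only [List.length_append, List.length_cons, List.length_nil]
        omega
      · rw [List.flatten_append, hfs_flat]; simpa using hp
      · intro x hx
        rcases List.mem_append.mp hx with h | h
        · exact hfs_nyl x h
        · simp only [List.mem_singleton] at h; rwa [h]
      · apply List.IsChain.append hfs_ch (List.isChain_singleton s)
        intro x hx y hy
        rw [hfs, List.getLast?_concat] at hx
        simp only [List.head?_cons, Option.mem_def, Option.some.injEq] at hx hy
        rw [← hx, ← hy]
        exact hle
    · have hspk : LexLt s pk := by
        rcases lexLt_trichotomy s pk with h | h | h
        · exact h
        · exact absurd (Or.inl h.symm) hle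
        · exact absurd (Or.inr h) hle
      by_cases hfs' : fs' = []
      · have hppk : p = pk := by rw [← hfs_flat, hfs, hfs']; simp
        rw [← hp, hppk]
        exact lexLt_append s pk hspk s
      · set u := pk ++ s with hu_def
        have hfs'_len : 1 ≤ fs'.flatten.length := by
          obtain ⟨a, t, rfl⟩ := List.exists_cons_of_ne_nil hfs'
          have ha : a ≠ [] := IsNyldonAux.ne_nil (hfs_nyl a (by rw [hfs]; simp))
          have := List.length_pos_iff.mpr ha
          simp only [List.flatten_cons, List.length_append]
          omega
        have hflat' : fs'.flatten ++ pk = p := by rw [← hfs_flat, hfs]; simp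
        have husuf : u <:+ w :=
          ⟨fs'.flatten, by rw [hu_def, ← List.append_assoc, hflat', hp]⟩
        have hulen : u.length < w.length := by
          have h4 := congrArg List.length hflat'
          have h5 := congrArg List.length hp
          simp only [List.length_append] at h4 h5
          rw [hu_def]
          simp only [List.length_append]
          omega
        have hslen_u : s.length < u.length := by
          rw [hu_def]
          simp only [List.length_append]
          have := List.length_pos_iff.mpr hpk_ne
          omega
        have hsu_suf : s <:+ u := ⟨pk, rfl⟩
        have hsu_ne : s ≠ u := by intro h; rw [← h] at hslen_u; omega
        have hu_ne_w : u ≠ w := by intro h; rw [h] at hulen; omega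
        by_cases hu : IsNyldon u
        · have h1 : LexLt s u :=
            IHn u.length (lt_of_lt_of_le hulen hwn) u s le_rfl hu hs hsu_suf hsu_ne
          have h2 : LexLt u w :=
            IHd (w.length - u.length) (by omega) w u hwn le_rfl hw hu husuf hu_ne_w
          exact lexLt_trans h1 h2
        · have hune : u ≠ [] := by rw [hu_def]; simp [hpk_ne]
          obtain ⟨vs, hvs2, hvs_nyl, hvs_ch, hvs_flat⟩ := not_nyldon_fact hune hu
          obtain ⟨gs, vm, hvs⟩ := (List.eq_nil_or_concat' vs).resolve_left
            (by rintro rfl; simp at hvs2)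
          have hgs_ne : gs ≠ [] := by
            rintro rfl
            rw [hvs] at hvs2
            simp at hvs2
          have hsm : s.length ≤ vm.length := by
            apply last_longest n HS gs vm s
            · rw [← hvs]; exact hvs_nyl
            · rw [← hvs]; exact hvs_ch
            · exact hs
            · rw [← hvs, hvs_flat]; exact hsu_suf
            · rw [← hvs, hvs_flat]; omega
          have hvm_nyl : IsNyldon vm := hvs_nyl vm (by rw [hvs]; simp)
          have h3 : gs.flatten ++ vm = u := by rw [← hvs_flat, hvs]; simp
          have hvm_suf_u : vm <:+ u := ⟨gs.flatten, h3⟩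
          have hgs_len : 1 ≤ gs.flatten.length := by
            obtain ⟨a, t, rfl⟩ := List.exists_cons_of_ne_nil hgs_ne
            have ha : a ≠ [] := IsNyldonAux.ne_nil (hvs_nyl a (by rw [hvs]; simp))
            have := List.length_pos_iff.mpr ha
            simp only [List.flatten_cons, List.length_append]
            omega
          have hvm_lt_u : vm.length < u.length := by
            have h6 := congrArg List.length h3
            simp only [List.length_append] at h6
            omega
          by_cases heq : s.length = vm.length
          · exfalso
            have hsvm : s = vm :=
              (suffix_of_suffix_length_le hsu_suf hvm_suf_u (le_of_eq heq)).eq_of_length heq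
            have h7 : gs.flatten ++ s = pk ++ s := by rw [hsvm, h3, hu_def, hsvm]
            have hgspk : gs.flatten = pk := List.append_cancel_right h7
            obtain ⟨g', gs'', hgs⟩ := List.exists_cons_of_ne_nil hgs_ne
            cases gs'' with
            | nil =>
              have hg'pk : g' = pk := by
                rw [hgs] at hgspk
                simpa using hgspk
              rw [hvs, hgs] at hvs_ch
              simp only [List.singleton_append] at hvs_ch
              have hle' : LexLe g' vm := List.isChain_pair.mp hvs_ch
              rw [hg'pk, ← hsvm] at hle'
              exact hle hle'
            | cons g'' rest =>
              apply IsNyldonAux.no_fact hpk_nyl gs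
              · rw [hgs]
                simp only [List.length_cons]
                omega
              · exact hgspk
              · exact fun f hf => hvs_nyl f (by rw [hvs]; exact List.mem_append_left _ hf)
              · have := hvs_ch
                rw [hvs] at this
                exact this.left_of_append
          · have hlt2 : s.length < vm.length := lt_of_le_of_ne hsm heq
            have hvm_suf_w : vm <:+ w := hvm_suf_u.trans husuf
            have hvm_ne_w : vm ≠ w := by
              intro h
              rw [h] at hvm_lt_u
              omega
            have hsvm_suf : s <:+ vm := suffix_of_suffix_length_le hsu_suf hvm_suf_u hsm
            have hs_ne_vm : s ≠ vm := fun h => heq (by rw [h])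
            have h1 : LexLt s vm :=
              IHn vm.length (by omega) vm s le_rfl hvm_nyl hs hsvm_suf hs_ne_vm
            have h2 : LexLt vm w :=
              IHd (w.length - vm.length) (by omega) w vm hwn le_rfl hw hvm_nyl
                hvm_suf_w hvm_ne_w
            exact lexLt_trans h1 h2
  exact fun w s hw => inner n w s hw (le_trans (Nat.sub_le _ _) hw)

end Main2

/-- For every Nyldon word `x` and every proper nonempty suffix `s` of `x`
such that `s` is Nyldon, one has `s <_lex x`. -/
theorem stmt_0 {A : Type*} [LinearOrder A] [Fintype A] (hA : 2 ≤ Fintype.card A)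
    (x s : List A) (hx : IsNyldon x) (hs : IsNyldon s)
    (hsuffix : s <:+ x) (hproper : s ≠ x) :
    LexLt s x :=
  nyldon_suffix x.length x s le_rfl hx hs hsuffix hproper
end

section
/- Let (G, ≺) be a Nyldon-like set over A, let m ≥ 2, and let u_1, u_2, …, u_m ∈ G be such that: (1) the word w = u_1 u_2 ⋯ u_m is in G; and (2) for all 1 ≤ i ≤ j ≤ m, every G-factorization of the word u_i u_{i+1} ⋯ u_j preserves the blocks u_i, u_{i+1}, …, u_j. Then w ≻ u_1. -/
section Stmt5Aux

open List

variable {A : Type*} [LinearOrder A]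

/-- Block-level factorization: a partition of the block list `bs` into nonempty
consecutive runs whose flattenings are `G`-words forming a nondecreasing chain. -/
def BF (G : NyldonLike A) (P : List (List (List A))) (bs : List (List A)) : Prop :=
  (∀ p ∈ P, p ≠ []) ∧ P.flatten = bs ∧ (∀ p ∈ P, G.Mem p.flatten) ∧
    (P.map List.flatten).Chain' G.le

theorem factK (G : NyldonLike A) {w : List A} (hw : G.Mem w) {fs : List (List A)}
    (h2 : 2 ≤ fs.length) (hf : ∀ f ∈ fs, G.Mem f) (hc : fs.Chain' G.le)
    (hfl : fs.flatten = w) : False := by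
  have hne : ∀ f ∈ fs, f ≠ [] := fun f hf' => G.mem_ne_nil f (hf f hf')
  have hlen : 2 ≤ w.length := by
    have := length_le_length_flatten_of_ne_nil hne
    rw [hfl] at this; omega
  exact (G.mem_iff w hlen).mp hw ⟨fs, h2, hf, hc, hfl⟩

theorem BFK (G : NyldonLike A) {P : List (List (List A))} {bs : List (List A)}
    (hP : BF G P bs) (h2 : 2 ≤ P.length) (hw : G.Mem bs.flatten) : False := by
  obtain ⟨hne, hfl, hmem, hch⟩ := hP
  refine factK G hw (fs := P.map List.flatten) (by simpa using h2) ?_ hch ?_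
  · intro f hf
    obtain ⟨p, hp, rfl⟩ := List.mem_map.mp hf
    exact hmem p hp
  · rw [← List.flatten_flatten, hfl]

theorem suffix_of_suffix_le {α : Type*} {v₁ v₂ l : List α} (h₁ : v₁ <:+ l) (h₂ : v₂ <:+ l)
    (h : v₁.length ≤ v₂.length) : v₁ <:+ v₂ := by
  rcases List.suffix_or_suffix_of_suffix h₁ h₂ with hs | hs
  · exact hs
  · have := hs.eq_of_length (le_antisymm hs.length_le h)
    rw [this]

theorem getLast_suffix_flatten {β : Type*} {P : List (List β)} (h : P ≠ []) :
    P.getLast h <:+ P.flatten := by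
  conv_rhs => rw [← List.dropLast_append_getLast h]
  rw [List.flatten_append]
  simp

theorem mem_infix_flatten {β : Type*} {P : List (List β)} {p : List β} (h : p ∈ P) :
    p <:+: P.flatten := by
  obtain ⟨s, t, rfl⟩ := List.append_of_mem h
  exact ⟨s.flatten, t.flatten, by simp⟩

theorem getLast_length_lt {β : Type*} {P : List (List β)} (h : P ≠ [])
    (h2 : 2 ≤ P.length) (hne : ∀ p ∈ P, p ≠ []) :
    (P.getLast h).length < P.flatten.length := by
  have hdec : P.dropLast ++ [P.getLast h] = P := List.dropLast_append_getLast h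
  have hdl : P.dropLast ≠ [] := by
    intro hnil
    rw [hnil] at hdec
    simp at hdec
    rw [← hdec] at h2
    simp at h2
  have hdlf : P.dropLast.flatten ≠ [] := by
    intro hnil
    rw [List.flatten_eq_nil_iff] at hnil
    obtain ⟨q, hq⟩ := List.exists_mem_of_ne_nil _ hdl
    exact hne q (List.dropLast_subset _ hq) (hnil q hq)
  have hpos : 0 < P.dropLast.flatten.length := List.length_pos_iff.mpr hdlf
  conv_rhs => rw [← hdec]
  rw [List.flatten_append, List.length_append]
  have he : (List.flatten [P.getLast h]).length = (P.getLast h).length := by simp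
  omega

theorem existsFact {A : Type*} [LinearOrder A] (G : NyldonLike A) (w : List A) (hw : w ≠ []) :
    ∃ fs, G.IsFactorization fs w := by
  by_cases h : G.Mem w
  · refine ⟨[w], ?_, List.isChain_singleton _, by simp⟩
    intro f hf
    rw [List.mem_singleton] at hf
    exact hf ▸ h
  · have hlen : 2 ≤ w.length := by
      rcases w with _ | ⟨a, t⟩
      · exact absurd rfl hw
      · rcases t with _ | ⟨b, t⟩
        · exact absurd (G.singleton_mem a) h
        · simp
    have hex : ∃ fs : List (List A), 2 ≤ fs.length ∧ (∀ f ∈ fs, G.Mem f) ∧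
        fs.Chain' (fun u v => u = v ∨ G.lt u v) ∧ fs.flatten = w := by
      by_contra hn
      exact h ((G.mem_iff w hlen).mpr hn)
    obtain ⟨fs, _, hmem, hch, hfl⟩ := hex
    exact ⟨fs, hmem, hch, hfl⟩

theorem pres_of_infix {A : Type*} [LinearOrder A] {G : NyldonLike A} {us : List (List A)}
    (hpres : ∀ i j : ℕ, i ≤ j → j < us.length →
      ∀ fs : List (List A),
        G.IsFactorization fs ((us.drop i).take (j + 1 - i)).flatten →
        PreservesBlocks ((us.drop i).take (j + 1 - i)) fs)
    {bs : List (List A)} (hinf : bs <:+: us) (hbne : bs ≠ [])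
    {fs : List (List A)} (hf : G.IsFactorization fs bs.flatten) :
    PreservesBlocks bs fs := by
  obtain ⟨s, t, hst⟩ := hinf
  have h1 : 1 ≤ bs.length := List.length_pos_iff.mpr hbne
  have harith : s.length + bs.length - 1 + 1 - s.length = bs.length := by omega
  have hi : (us.drop s.length).take (s.length + bs.length - 1 + 1 - s.length) = bs := by
    rw [harith, ← hst, List.append_assoc, List.drop_left, List.take_left]
  have hj : s.length + bs.length - 1 < us.length := by
    rw [← hst]; simp [List.length_append]; omega
  have := hpres s.length (s.length + bs.length - 1) (by omega) hj fs (by rw [hi]; exact hf)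
  rwa [hi] at this

theorem existsBF {A : Type*} [LinearOrder A] {G : NyldonLike A} {us : List (List A)}
    (hmem : ∀ u ∈ us, G.Mem u)
    (hpres : ∀ i j : ℕ, i ≤ j → j < us.length →
      ∀ fs : List (List A),
        G.IsFactorization fs ((us.drop i).take (j + 1 - i)).flatten →
        PreservesBlocks ((us.drop i).take (j + 1 - i)) fs)
    {bs : List (List A)} (hinf : bs <:+: us) (hbne : bs ≠ []) :
    ∃ P, ∃ _ : P ≠ [], BF G P bs := by
  have hflne : bs.flatten ≠ [] := by
    intro hnil
    rw [List.flatten_eq_nil_iff] at hnil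
    obtain ⟨b, hb⟩ := List.exists_mem_of_ne_nil _ hbne
    exact G.mem_ne_nil b (hmem b (hinf.subset hb)) (hnil b hb)
  obtain ⟨fs, hfs⟩ := existsFact G bs.flatten hflne
  obtain ⟨P, hP1, hP2, hP3⟩ := pres_of_infix hpres hinf hbne hfs
  have hPne : P ≠ [] := by
    intro hnil
    rw [hnil] at hP2
    simp at hP2
    exact hbne hP2
  refine ⟨P, hPne, hP1, hP2, ?_, ?_⟩
  · intro p hp
    exact hfs.1 _ (hP3 ▸ List.mem_map_of_mem (f := List.flatten) hp)
  · rw [hP3]; exact hfs.2.1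

/-- Statement L: the last factor of any block factorization of a run `bs` is at least
as long (in blocks) as any `G`-suffix-run of `bs`. -/
def Lst {A : Type*} [LinearOrder A] (G : NyldonLike A) (us : List (List A)) (n : ℕ) : Prop :=
  ∀ bs : List (List A), bs.length ≤ n → bs <:+: us →
    ∀ (P : List (List (List A))) (hP : P ≠ []), BF G P bs →
      ∀ v : List (List A), v <:+ bs → v ≠ [] → G.Mem v.flatten →
        v.length ≤ (P.getLast hP).length

/-- Statement M: a proper `G`-suffix-run of a `G`-run is smaller. -/
def Mst {A : Type*} [LinearOrder A] (G : NyldonLike A) (us : List (List A)) (n : ℕ) : Prop :=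
  ∀ bs : List (List A), bs.length ≤ n → bs <:+: us → G.Mem bs.flatten →
    ∀ v : List (List A), v <:+ bs → v ≠ [] → v ≠ bs → G.Mem v.flatten →
      G.lt v.flatten bs.flatten

/-- Statement T: the first block of a `G`-run of at least two blocks is smaller. -/
def Tst {A : Type*} [LinearOrder A] (G : NyldonLike A) (us : List (List A)) (n : ℕ) : Prop :=
  ∀ bs : List (List A), bs.length ≤ n → bs <:+: us → 2 ≤ bs.length → G.Mem bs.flatten →
    ∀ a ∈ bs.head?, G.lt a bs.flatten

theorem stmt5PG {A : Type*} [LinearOrder A] {G : NyldonLike A} {us : List (List A)}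
    (hmem : ∀ u ∈ us, G.Mem u)
    (hpres : ∀ i j : ℕ, i ≤ j → j < us.length →
      ∀ fs : List (List A),
        G.IsFactorization fs ((us.drop i).take (j + 1 - i)).flatten →
        PreservesBlocks ((us.drop i).take (j + 1 - i)) fs)
    {n : ℕ} (hL : ∀ k < n, Lst G us k)
    {bs : List (List A)} (hbn : bs.length = n) (hinf : bs <:+: us)
    (h2 : 2 ≤ bs.length) (hbmem : G.Mem bs.flatten) :
    ∃ k : ℕ, 1 ≤ k ∧ k < bs.length ∧ G.Mem (bs.take k).flatten ∧
      G.Mem (bs.drop k).flatten ∧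
      G.lt (bs.drop k).flatten (bs.take k).flatten ∧
      G.lt (bs.take k).flatten bs.flatten ∧
      (∀ k', 1 ≤ k' → k' < bs.length → G.Mem (bs.drop k').flatten → k ≤ k') := by
  classical
  have hex : ∃ k : ℕ, 1 ≤ k ∧ k < bs.length ∧ G.Mem (bs.drop k).flatten := by
    refine ⟨bs.length - 1, by omega, by omega, ?_⟩
    have hlen1 : (bs.drop (bs.length - 1)).length = 1 := by
      rw [List.length_drop]; omega
    obtain ⟨u, hu⟩ := List.length_eq_one_iff.mp hlen1
    have hmu : u ∈ bs := by
      have : u ∈ bs.drop (bs.length - 1) := by rw [hu]; simp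
      exact (List.drop_subset _ _) this
    have hum : G.Mem u := hmem u (hinf.subset hmu)
    rw [hu]; simpa using hum
  set k := Nat.find hex with hkdef
  obtain ⟨hk1, hkb, hvmem⟩ : 1 ≤ k ∧ k < bs.length ∧ G.Mem (bs.drop k).flatten :=
    Nat.find_spec hex
  have hmin : ∀ k', 1 ≤ k' → k' < bs.length → G.Mem (bs.drop k').flatten → k ≤ k' :=
    fun k' h1 hb hm => Nat.find_min' hex ⟨h1, hb, hm⟩
  set p := bs.take k with hp
  set v := bs.drop k with hv
  have hpv : p ++ v = bs := List.take_append_drop k bs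
  have hplen : p.length = k := by rw [hp, List.length_take]; omega
  have hvlen : v.length = bs.length - k := by rw [hv, List.length_drop]
  have hpne : p ≠ [] := by intro hnil; rw [hnil] at hplen; simp at hplen; omega
  have hvne : v ≠ [] := by intro hnil; rw [hnil] at hvlen; simp at hvlen; omega
  have hpinf : p <:+: us := ((List.take_prefix k bs).isInfix).trans hinf
  have hflat : p.flatten ++ v.flatten = bs.flatten := by
    rw [← List.flatten_append, hpv]
  have hpmem : G.Mem p.flatten := by
    by_contra hnp
    obtain ⟨P, hPne, hBF⟩ := existsBF hmem hpres hpinf hpne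
    have hP2 : 2 ≤ P.length := by
      rcases P with _ | ⟨q, P'⟩
      · exact absurd rfl hPne
      · rcases P' with _ | ⟨q', P''⟩
        · exfalso
          apply hnp
          have hqp : q = p := by have := hBF.2.1; simpa using this
          rw [← hqp]
          exact hBF.2.2.1 q (by simp)
        · simp
    set f := P.getLast hPne with hf
    have hfsuf : f <:+ p := by
      have := getLast_suffix_flatten hPne
      rwa [hBF.2.1] at this
    have hfmem : G.Mem f.flatten := hBF.2.2.1 f (List.getLast_mem hPne)
    have hfne : f ≠ [] := hBF.1 f (List.getLast_mem hPne)
    have hfpos : 1 ≤ f.length := List.length_pos_iff.mpr hfne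
    have hflt : f.length < p.length := by
      have := getLast_length_lt hPne hP2 hBF.1
      rwa [hBF.2.1] at this
    set z := f ++ v with hz
    have hzsuf : z <:+ bs := by
      obtain ⟨t, ht⟩ := hfsuf
      exact ⟨t, by rw [hz, ← List.append_assoc, ht, hpv]⟩
    have hzlen : z.length = f.length + v.length := by rw [hz, List.length_append]
    have hzltbs : z.length < bs.length := by
      have : bs.length = p.length + v.length := by rw [← hpv, List.length_append]
      omega
    have hzne : z ≠ [] := by
      intro hnil; rw [hz] at hnil; simp at hnil; exact hfne hnil.1
    have hzinf : z <:+: us := hzsuf.isInfix.trans hinf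
    have hznmem : ¬ G.Mem z.flatten := by
      intro hzm
      have hzdrop : z = bs.drop (bs.length - z.length) := List.suffix_iff_eq_drop.mp hzsuf
      have hk2 : bs.length - z.length < k := by omega
      exact Nat.find_min hex hk2 ⟨by omega, by omega, by rw [← hzdrop]; exact hzm⟩
    obtain ⟨Hs, hHne, hHBF⟩ := existsBF hmem hpres hzinf hzne
    have hH2 : 2 ≤ Hs.length := by
      rcases Hs with _ | ⟨q, H'⟩
      · exact absurd rfl hHne
      · rcases H' with _ | ⟨q', H''⟩
        · exfalso
          apply hznmem
          have hqz : q = z := by have := hHBF.2.1; simpa using this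
          rw [← hqz]
          exact hHBF.2.2.1 q (by simp)
        · simp
    set he := Hs.getLast hHne with hhe
    have hhesuf : he <:+ z := by
      have := getLast_suffix_flatten hHne; rwa [hHBF.2.1] at this
    have hhemem : G.Mem he.flatten := hHBF.2.2.1 he (List.getLast_mem hHne)
    have hhene : he ≠ [] := hHBF.1 he (List.getLast_mem hHne)
    have hvsufz : v <:+ z := ⟨f, rfl⟩
    have hvlehe : v.length ≤ he.length := by
      have hn1 : z.length < n := by omega
      exact hL z.length hn1 z le_rfl hzinf Hs hHne hHBF v hvsufz hvne hvmem
    have hhelt : he.length < z.length := by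
      have := getLast_length_lt hHne hH2 hHBF.1
      rwa [hHBF.2.1] at this
    have hhesufbs : he <:+ bs := hhesuf.trans hzsuf
    have hhelen1 : 1 ≤ he.length := List.length_pos_iff.mpr hhene
    have hhele : he.length ≤ v.length := by
      have hdrop : he = bs.drop (bs.length - he.length) := List.suffix_iff_eq_drop.mp hhesufbs
      have hQ' : k ≤ bs.length - he.length :=
        hmin _ (by omega) (by omega) (by rw [← hdrop]; exact hhemem)
      omega
    have hheq : he = v := by
      have h1 : he <:+ v := suffix_of_suffix_le hhesufbs (List.drop_suffix k bs) hhele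
      exact h1.eq_of_length (le_antisymm hhele hvlehe)
    have hdec : Hs.dropLast ++ [v] = Hs := by
      rw [← hheq]; exact List.dropLast_append_getLast hHne
    have hfldl : Hs.dropLast.flatten = f := by
      have h1 : (Hs.dropLast ++ [v]).flatten = z := by rw [hdec, hHBF.2.1]
      rw [List.flatten_append] at h1
      simp only [List.flatten_cons, List.flatten_nil, List.append_nil] at h1
      rw [hz] at h1
      exact List.append_cancel_right h1
    have hchHs : ((Hs.dropLast ++ [v]).map List.flatten).Chain' G.le := by
      rw [hdec]; exact hHBF.2.2.2
    rw [List.map_append] at hchHs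
    obtain ⟨hchdl, -, hjun⟩ := List.isChain_append.mp hchHs
    have hdlne : Hs.dropLast ≠ [] := by
      intro hnil
      rw [hnil] at hfldl
      simp at hfldl
      exact hfne hfldl
    have hdl1 : Hs.dropLast.length = 1 := by
      by_contra hne1
      have hge2 : 2 ≤ Hs.dropLast.length := by
        have := List.length_pos_iff.mpr hdlne
        omega
      refine BFK G (P := Hs.dropLast) (bs := f) ⟨?_, hfldl, ?_, hchdl⟩ hge2 hfmem
      · intro q hq; exact hHBF.1 q (List.dropLast_subset _ hq)
      · intro q hq; exact hHBF.2.2.1 q (List.dropLast_subset _ hq)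
    have hlef : G.le f.flatten v.flatten := by
      obtain ⟨q, hq⟩ := List.length_eq_one_iff.mp hdl1
      have hqf : q = f := by rw [hq] at hfldl; simpa using hfldl
      refine hjun f.flatten ?_ v.flatten (by simp)
      rw [hq, hqf]; simp
    have hWBF : BF G (P ++ [v]) bs := by
      refine ⟨?_, ?_, ?_, ?_⟩
      · intro q hq
        rcases List.mem_append.mp hq with h | h
        · exact hBF.1 q h
        · rw [List.mem_singleton] at h; exact h ▸ hvne
      · rw [List.flatten_append]
        simp only [List.flatten_cons, List.flatten_nil, List.append_nil]
        rw [hBF.2.1]; exact hpv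
      · intro q hq
        rcases List.mem_append.mp hq with h | h
        · exact hBF.2.2.1 q h
        · rw [List.mem_singleton] at h; exact h ▸ hvmem
      · rw [List.map_append]
        refine List.isChain_append.mpr ⟨hBF.2.2.2, List.isChain_singleton _, ?_⟩
        intro x hx y hy
        have hx' : f.flatten = x := by
          rw [List.getLast?_map, List.getLast?_eq_getLast hPne] at hx
          simpa using hx
        have hy' : v.flatten = y := by simpa using hy
        rw [← hx', ← hy']
        exact hlef
    refine BFK G hWBF ?_ hbmem
    · rw [List.length_append]
      have := List.length_pos_iff.mpr hPne
      simp; omega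
  have hvltp : G.lt v.flatten p.flatten := by
    have hnch : ¬ G.le p.flatten v.flatten := by
      intro hle
      refine factK G hbmem (fs := [p.flatten, v.flatten]) (by simp) ?_
        (List.isChain_pair.mpr hle) ?_
      · intro x hx
        simp only [List.mem_cons, List.mem_singleton, List.not_mem_nil, or_false] at hx
        rcases hx with h | h
        · exact h ▸ hpmem
        · exact h ▸ hvmem
      · simp only [List.flatten_cons, List.flatten_nil, List.append_nil]
        exact hflat
    rcases G.lt_total p.flatten v.flatten hpmem hvmem with h | h | h
    · exact absurd (Or.inr h) hnch
    · exact absurd (Or.inl h) hnch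
    · exact h
  have hpltbs : G.lt p.flatten bs.flatten := by
    have := G.append_lt p.flatten v.flatten hpmem hvmem (by rw [hflat]; exact hbmem)
    rwa [hflat] at this
  exact ⟨k, hk1, hkb, hpmem, hvmem, hvltp, hpltbs, hmin⟩

theorem stmt5Big {A : Type*} [LinearOrder A] {G : NyldonLike A} {us : List (List A)}
    (hmem : ∀ u ∈ us, G.Mem u)
    (hpres : ∀ i j : ℕ, i ≤ j → j < us.length →
      ∀ fs : List (List A),
        G.IsFactorization fs ((us.drop i).take (j + 1 - i)).flatten →
        PreservesBlocks ((us.drop i).take (j + 1 - i)) fs) :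
    ∀ n : ℕ, Lst G us n ∧ Mst G us n ∧ Tst G us n := by
  intro n
  induction n using Nat.strong_induction_on with
  | _ n IH =>
  have hLst : Lst G us n := by
    intro bs hble hinf P hPne hBF v hvsuf hvne hvmem
    rcases Nat.lt_or_ge bs.length n with hlt | hge
    · exact (IH bs.length hlt).1 bs le_rfl hinf P hPne hBF v hvsuf hvne hvmem
    have hbn : bs.length = n := le_antisymm hble hge
    rcases P with _ | ⟨g, P'⟩
    · exact absurd rfl hPne
    rcases P' with _ | ⟨g₂, P''⟩
    · -- single factor
      have hgbs : g = bs := by have := hBF.2.1; simpa using this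
      have hgl : (([g] : List (List (List A))).getLast hPne) = g := by simp
      rw [hgl, hgbs]
      exact hvsuf.length_le
    set P' : List (List (List A)) := g₂ :: P'' with hP'def
    have hP'ne : P' ≠ [] := by simp [hP'def]
    have hgne : g ≠ [] := hBF.1 g (by simp)
    have hg₂ne : g₂ ≠ [] := hBF.1 g₂ (by simp [hP'def])
    have hgmem : G.Mem g.flatten := hBF.2.2.1 g (by simp)
    have hg₂mem : G.Mem g₂.flatten := hBF.2.2.1 g₂ (by simp [hP'def])
    have hbs : bs = g ++ P'.flatten := by rw [← hBF.2.1]; simp [hP'def]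
    have hfP'suf : P'.flatten <:+ bs := ⟨g, hbs.symm⟩
    have hfP'pos : 1 ≤ P'.flatten.length := by
      rw [hP'def]
      simp only [List.flatten_cons, List.length_append]
      have := List.length_pos_iff.mpr hg₂ne
      omega
    have hglpos : 1 ≤ g.length := List.length_pos_iff.mpr hgne
    have hbslen : bs.length = g.length + P'.flatten.length := by
      rw [hbs, List.length_append]
    have hch : (List.map List.flatten (g :: P')).Chain' G.le := hBF.2.2.2
    rw [hP'def] at hch
    simp only [List.map_cons] at hch
    obtain ⟨hgg₂, hchtail⟩ := List.isChain_cons_cons.mp hch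
    have hBF' : BF G P' P'.flatten := by
      refine ⟨?_, rfl, ?_, ?_⟩
      · intro q hq; exact hBF.1 q (by simp [hP'def]; simp [hP'def] at hq; tauto)
      · intro q hq; exact hBF.2.2.1 q (by simp [hP'def]; simp [hP'def] at hq; tauto)
      · rw [hP'def]; simp only [List.map_cons]; exact hchtail
    have hgl2 : ((g :: P').getLast hPne) = P'.getLast hP'ne := List.getLast_cons hP'ne
    rw [hgl2]
    by_cases hvle : v.length ≤ P'.flatten.length
    · have hvsufP' : v <:+ P'.flatten := suffix_of_suffix_le hvsuf hfP'suf hvle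
      have hlt' : P'.flatten.length < n := by omega
      exact (IH P'.flatten.length hlt').1 P'.flatten le_rfl
        (hfP'suf.isInfix.trans hinf) P' hP'ne hBF' v hvsufP' hvne hvmem
    push_neg at hvle
    exfalso
    by_cases hvbs : v = bs
    · refine BFK G hBF ?_ (hvbs ▸ hvmem)
      simp [hP'def]
    have hvltbs : v.length < bs.length :=
      lt_of_le_of_ne hvsuf.length_le (fun h => hvbs (hvsuf.eq_of_length h))
    set x := v.take (v.length - P'.flatten.length) with hx
    have hd : v.drop (v.length - P'.flatten.length) = P'.flatten := by
      have h1 : v.drop (v.length - P'.flatten.length) <:+ bs :=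
        (List.drop_suffix _ _).trans hvsuf
      have h2 : (v.drop (v.length - P'.flatten.length)).length = P'.flatten.length := by
        rw [List.length_drop]; omega
      exact (suffix_of_suffix_le h1 hfP'suf (by omega)).eq_of_length h2
    have hxv : x ++ P'.flatten = v := by
      have hta := List.take_append_drop (v.length - P'.flatten.length) v
      rw [hd] at hta
      rw [hx]
      exact hta
    have hxlen : x.length = v.length - P'.flatten.length := by
      rw [hx, List.length_take]; omega
    have hxne : x ≠ [] := by
      intro h
      have hx0 : x.length = 0 := by rw [h]; rfl
      omega
    have hxsufg : x <:+ g := by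
      obtain ⟨t, ht⟩ := hvsuf
      have heq : (t ++ x) ++ P'.flatten = g ++ P'.flatten := by
        rw [List.append_assoc, hxv, ht, hbs]
      exact ⟨t, List.append_cancel_right heq⟩
    have hxltg : x.length < g.length := by omega
    have hginf : g <:+: us := by
      have h1 : g <:+: (g :: P').flatten := mem_infix_flatten (by simp)
      rw [hBF.2.1] at h1
      exact h1.trans hinf
    have hxinf : x <:+: us := (hxsufg.isInfix).trans hginf
    obtain ⟨Qs, hQne, hQBF⟩ := existsBF hmem hpres hxinf hxne
    set q := Qs.getLast hQne with hq
    have hqsufx : q <:+ x := by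
      have := getLast_suffix_flatten hQne; rwa [hQBF.2.1] at this
    have hqmem : G.Mem q.flatten := hQBF.2.2.1 q (List.getLast_mem hQne)
    have hqne : q ≠ [] := hQBF.1 q (List.getLast_mem hQne)
    have hnoch : ¬ (((Qs ++ P').map List.flatten).Chain' G.le) := by
      intro hch2
      refine BFK G (P := Qs ++ P') (bs := v) ⟨?_, ?_, ?_, hch2⟩ ?_ hvmem
      · intro r hr
        rcases List.mem_append.mp hr with h | h
        · exact hQBF.1 r h
        · exact hBF'.1 r h
      · rw [List.flatten_append, hQBF.2.1]; exact hxv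
      · intro r hr
        rcases List.mem_append.mp hr with h | h
        · exact hQBF.2.2.1 r h
        · exact hBF'.2.2.1 r h
      · rw [List.length_append]
        have h1 := List.length_pos_iff.mpr hQne
        have h2 := List.length_pos_iff.mpr hP'ne
        omega
    rw [List.map_append] at hnoch
    have hchQ : (Qs.map List.flatten).Chain' G.le := hQBF.2.2.2
    have hchP' : (P'.map List.flatten).Chain' G.le := hBF'.2.2.2
    have hjun : ¬ G.le q.flatten g₂.flatten := by
      intro hle
      apply hnoch
      refine List.isChain_append.mpr ⟨hchQ, hchP', ?_⟩
      intro a ha b hb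
      rw [List.getLast?_map, List.getLast?_eq_getLast hQne] at ha
      rw [hP'def] at hb
      simp only [List.map_cons, List.head?_cons, Option.mem_def, Option.map_some,
        Option.some.injEq] at ha hb
      rw [← ha, ← hb]
      exact hle
    have hg₂q : G.lt g₂.flatten q.flatten := by
      rcases G.lt_total q.flatten g₂.flatten hqmem hg₂mem with h | h | h
      · exact absurd (Or.inr h) hjun
      · exact absurd (Or.inl h) hjun
      · exact h
    have hglt : g.length < n := by omega
    have hqltg : G.lt q.flatten g.flatten := by
      refine (IH g.length hglt).2.1 g le_rfl hginf hgmem q (hqsufx.trans hxsufg) hqne ?_ hqmem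
      intro h
      have h1 := hqsufx.length_le
      rw [h] at h1
      omega
    have hqltg₂ : G.lt q.flatten g₂.flatten := by
      rcases hgg₂ with heq | hlt
      · rw [← heq]; exact hqltg
      · exact G.lt_trans _ _ _ hqmem hgmem hg₂mem hqltg hlt
    exact G.lt_irrefl q.flatten hqmem
      (G.lt_trans _ _ _ hqmem hg₂mem hqmem hqltg₂ hg₂q)
  have hMst : Mst G us n := by
    intro bs hble hinf hbmem v hvsuf hvne hvbs hvmem
    rcases Nat.lt_or_ge bs.length n with hlt | hge
    · exact (IH bs.length hlt).2.1 bs le_rfl hinf hbmem v hvsuf hvne hvbs hvmem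
    have hbn : bs.length = n := le_antisymm hble hge
    have hvpos : 1 ≤ v.length := List.length_pos_iff.mpr hvne
    have hvlt : v.length < bs.length :=
      lt_of_le_of_ne hvsuf.length_le (fun h => hvbs (hvsuf.eq_of_length h))
    have h2 : 2 ≤ bs.length := by omega
    obtain ⟨k, hk1, hkb, hpmem, hvsmem, hvltp, hpltbs, hmin⟩ :=
      stmt5PG hmem hpres (fun k hk => (IH k hk).1) hbn hinf h2 hbmem
    have hvd : v = bs.drop (bs.length - v.length) := List.suffix_iff_eq_drop.mp hvsuf
    have hkle : k ≤ bs.length - v.length :=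
      hmin _ (by omega) (by omega) (by rw [← hvd]; exact hvmem)
    rcases eq_or_lt_of_le hkle with heq | hlt2
    · have hveq : v = bs.drop k := by rw [hvd, ← heq]
      rw [hveq]
      exact G.lt_trans _ _ _ hvsmem hpmem hbmem hvltp hpltbs
    · have hvssuf : bs.drop k <:+ bs := List.drop_suffix _ _
      have hvslen : (bs.drop k).length = bs.length - k := List.length_drop
      have hvsufvs : v <:+ bs.drop k := suffix_of_suffix_le hvsuf hvssuf (by omega)
      have hvnevs : v ≠ bs.drop k := by
        intro h
        have := congrArg List.length h
        omega
      have hlt3 : (bs.drop k).length < n := by omega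
      have hvltvs := (IH _ hlt3).2.1 (bs.drop k) le_rfl (hvssuf.isInfix.trans hinf)
        hvsmem v hvsufvs hvne hvnevs hvmem
      exact G.lt_trans _ _ _ hvmem hvsmem hbmem hvltvs
        (G.lt_trans _ _ _ hvsmem hpmem hbmem hvltp hpltbs)
  refine ⟨hLst, hMst, ?_⟩
  intro bs hble hinf h2 hbmem a ha
  rcases Nat.lt_or_ge bs.length n with hlt | hge
  · exact (IH bs.length hlt).2.2 bs le_rfl hinf h2 hbmem a ha
  have hbn : bs.length = n := le_antisymm hble hge
  obtain ⟨k, hk1, hkb, hpmem, hvsmem, hvltp, hpltbs, hmin⟩ :=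
    stmt5PG hmem hpres (fun k hk => (IH k hk).1) hbn hinf h2 hbmem
  rcases bs with _ | ⟨a₀, bs'⟩
  · simp at ha
  have haa : a = a₀ := by
    have h' : a₀ = a := by simpa using ha
    exact h'.symm
  subst haa
  obtain ⟨m, rfl⟩ : ∃ m, k = m + 1 := ⟨k - 1, by omega⟩
  have hpeq : (a :: bs').take (m + 1) = a :: bs'.take m := List.take_succ_cons
  rcases Nat.eq_zero_or_pos m with hm0 | hmpos
  · subst hm0
    have h0 : ((a :: bs').take 1).flatten = a := by simp
    rwa [h0] at hpltbs
  · have hklen : m + 1 < (a :: bs').length := hkb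
    have hplen : ((a :: bs').take (m + 1)).length = m + 1 := by
      rw [List.length_take]; omega
    have hpinf : (a :: bs').take (m + 1) <:+: us := (List.take_prefix _ _).isInfix.trans hinf
    have hlt4 : ((a :: bs').take (m + 1)).length < n := by rw [hplen]; omega
    have hTp := (IH _ hlt4).2.2 ((a :: bs').take (m + 1)) le_rfl hpinf
      (by rw [hplen]; omega) hpmem a (by rw [hpeq]; simp)
    have hamem : G.Mem a := hmem a (hinf.subset (by simp))
    exact G.lt_trans _ _ _ hamem hpmem hbmem hTp hpltbs

end Stmt5Aux

/-- Let `(G, ≺)` be a Nyldon-like set and `u_1, …, u_m ∈ G` (`m ≥ 2`) be such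
that `w = u_1 ⋯ u_m ∈ G` and every `G`-factorization of every substring of blocks
`u_i ⋯ u_j` preserves the blocks `u_i, …, u_j`. Then `w ≻ u_1`. -/
theorem stmt_5 {A : Type*} [LinearOrder A] [Fintype A] (hA : 2 ≤ Fintype.card A)
    (G : NyldonLike A) (us : List (List A)) (hne : us ≠ []) (hm : 2 ≤ us.length)
    (hmem : ∀ u ∈ us, G.Mem u) (hw : G.Mem us.flatten)
    (hpres : ∀ i j : ℕ, i ≤ j → j < us.length →
      ∀ fs : List (List A),
        G.IsFactorization fs ((us.drop i).take (j + 1 - i)).flatten →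
        PreservesBlocks ((us.drop i).take (j + 1 - i)) fs) :
    G.lt (us.head hne) us.flatten := by
  have h := (stmt5Big hmem hpres us.length).2.2 us le_rfl (List.infix_refl us) hm hw
  exact h (us.head hne) (by rw [List.head?_eq_head hne]; rfl)
end

section
/- Let (G, ≺) be a Nyldon-like set over A. Then every nonempty word w over A has exactly one G-factorization: there exists a unique sequence (u_1, u_2, …, u_k) of words in G with u_1 ⪯ u_2 ⪯ ⋯ ⪯ u_k and w = u_1 u_2 ⋯ u_k. -/
section NLAux
set_option linter.unusedSectionVars false

open List

variable {A : Type*} [LinearOrder A] (G : NyldonLike A)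

lemma NLAux.le_lt_false {u v : List A} (hu : G.Mem u) (hv : G.Mem v)
    (h1 : G.le u v) (h2 : G.lt v u) : False := by
  rcases h1 with rfl | h1
  · exact G.lt_irrefl u hu h2
  · exact G.lt_irrefl u hu (G.lt_trans u v u hu hv hu h1 h2)

lemma NLAux.flatten_ne_nil {l : List (List A)} (hl : l ≠ []) (h : ∀ g ∈ l, g ≠ []) :
    l.flatten ≠ [] := by
  have h1 : 1 ≤ l.length := List.length_pos_iff.mpr hl
  have h2 := length_le_length_flatten_of_ne_nil h
  intro hc
  rw [hc] at h2; simp at h2; exact hl h2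

lemma NLAux.getLast_suffix_flatten : ∀ (l : List (List A)) (h : l ≠ []), l.getLast h <:+ l.flatten
  | [a], _ => by simp
  | a :: b :: t, _ => by
    have := NLAux.getLast_suffix_flatten (b :: t) (by simp)
    rw [List.getLast_cons (by simp), List.flatten_cons]
    exact this.trans (List.suffix_append _ _)

lemma NLAux.suffix_decomp : ∀ (hs : List (List A)) (x g : List A), x ≠ [] → x ++ g = hs.flatten →
    ∃ (l₁ : List (List A)) (h' : List A) (l₂ : List (List A)) (p s' : List A),
      hs = l₁ ++ h' :: l₂ ∧ h' = p ++ s' ∧ p ≠ [] ∧ g = s' ++ l₂.flatten ∧ x = l₁.flatten ++ p := by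
  intro hs
  induction hs with
  | nil => intro x g hx h; simp at h; exact absurd h.1 hx
  | cons h t ih =>
    intro x g hx heq
    rw [List.flatten_cons] at heq
    rcases List.append_eq_append_iff.mp heq with ⟨a', ha1, ha2⟩ | ⟨c', hc1, hc2⟩
    · exact ⟨[], h, t, x, a', by simp, ha1, hx, ha2, by simp⟩
    · rcases eq_or_ne c' [] with rfl | hc
      · refine ⟨[], h, t, h, [], by simp, by simp, ?_, by simpa using hc2.symm, by simpa using hc1⟩
        intro hh; rw [hh] at hc1; simp at hc1; exact hx hc1
      · obtain ⟨l₁, h', l₂, p, s', h1, h2, h3, h4, h5⟩ := ih c' g hc hc2.symm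
        exact ⟨h :: l₁, h', l₂, p, s', by rw [h1]; rfl, h2, h3, h4,
          by rw [hc1, h5, List.flatten_cons, List.append_assoc]⟩

lemma NLAux.not_chain_concat {g : List A} (hg : G.Mem g) {l : List (List A)}
    (hlen : 2 ≤ l.length) (hmem : ∀ f ∈ l, G.Mem f) (hflat : l.flatten = g) :
    ¬ l.Chain' G.le := by
  intro hch
  have hne : ∀ f ∈ l, f ≠ [] := fun f hf => G.mem_ne_nil f (hmem f hf)
  have h2 : 2 ≤ g.length := by
    have := length_le_length_flatten_of_ne_nil hne
    rw [hflat] at this; omega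
  exact ((G.mem_iff g h2).mp hg) ⟨l, hlen, hmem, hch, hflat⟩

lemma NLAux.exists_fact : ∀ (x : List A), x ≠ [] → ∃ fs, G.IsFactorization fs x := by
  intro x hx
  by_cases hm : G.Mem x
  · exact ⟨[x], fun f hf => by simp at hf; rw [hf]; exact hm, List.isChain_singleton x, by simp⟩
  · rcases Nat.lt_or_ge x.length 2 with h2 | h2
    · have h1 : x.length = 1 := by
        have := List.length_pos_iff.mpr hx; omega
      obtain ⟨a, rfl⟩ := List.length_eq_one_iff.mp h1
      exact absurd (G.singleton_mem a) hm
    · have hex : ∃ fs : List (List A), 2 ≤ fs.length ∧ (∀ f ∈ fs, G.Mem f) ∧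
          fs.Chain' (fun u v => u = v ∨ G.lt u v) ∧ fs.flatten = x := by
        by_contra hno
        exact hm ((G.mem_iff x h2).mpr hno)
      obtain ⟨fs, _, h1, h3, h4⟩ := hex
      exact ⟨fs, h1, h3, h4⟩

lemma NLAux.lemA {g : List A} (hg : G.Mem g) {as bs : List (List A)} (ha : as ≠ []) (hb : bs ≠ [])
    (hamem : ∀ f ∈ as, G.Mem f) (hbmem : ∀ f ∈ bs, G.Mem f)
    (hach : as.Chain' G.le) (hbch : bs.Chain' G.le)
    (hflat : as.flatten ++ bs.flatten = g) :
    G.lt (bs.head hb) (as.getLast ha) := by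
  have hnc : ¬ (as ++ bs).Chain' G.le := by
    apply NLAux.not_chain_concat G hg
    · rw [List.length_append]
      have := List.length_pos_iff.mpr ha; have := List.length_pos_iff.mpr hb; omega
    · intro f hf; rcases List.mem_append.mp hf with h | h
      · exact hamem f h
      · exact hbmem f h
    · rw [List.flatten_append, hflat]
  have hnle : ¬ G.le (as.getLast ha) (bs.head hb) := by
    intro hle
    apply hnc
    refine List.isChain_append.mpr ?_
    refine ⟨hach, hbch, ?_⟩
    intro x hx y hy
    rw [List.getLast?_eq_getLast ha] at hx
    rw [List.head?_eq_head hb] at hy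
    simp at hx hy
    rw [← hx, ← hy]; exact hle
  have hma : G.Mem (as.getLast ha) := hamem _ (List.getLast_mem ha)
  have hmb : G.Mem (bs.head hb) := hbmem _ (List.head_mem hb)
  rcases G.lt_total (as.getLast ha) (bs.head hb) hma hmb with h | h | h
  · exact absurd (Or.inr h) hnle
  · exact absurd (Or.inl h) hnle
  · exact h

lemma NLAux.meas1 {a b c z n : ℕ} (h1 : a < b) (h2 : c < b) (hN : b * b + (b - c) ≤ n + 1) :
    a * a + (a - z) ≤ n := by
  have e0 : (a + 1) * (a + 1) = a * a + 2 * a + 1 := by ring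
  have e1 : (a + 1) * (a + 1) ≤ b * b := Nat.mul_le_mul h1 h1
  have e2 : 1 ≤ b - c := by omega
  have e3 : a - z ≤ a := Nat.sub_le _ _
  linarith

lemma NLAux.meas2 {b g h Y n : ℕ} (h1 : g < h) (h2 : h < b) (hN : Y + (b - g) ≤ n + 1) :
    Y + (b - h) ≤ n := by
  have : b - h + 1 ≤ b - g := by omega
  linarith

end NLAux
section NLAux2
set_option linter.unusedSectionVars false
set_option maxHeartbeats 1000000

open List

variable {A : Type*} [LinearOrder A] (G : NyldonLike A)

lemma NLAux.cstar : ∀ (N : ℕ) (w g x : List A),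
    w.length * w.length + (w.length - g.length) ≤ N →
    G.Mem w → G.Mem g → x ≠ [] → w = x ++ g → G.lt g w := by
  intro N
  induction N with
  | zero =>
    intro w g x hN hw hg hx heq
    have h1 : 1 ≤ w.length := List.length_pos_iff.mpr (G.mem_ne_nil w hw)
    have h2 : w.length * w.length ≤ 0 := le_trans (Nat.le_add_right _ _) hN
    exact absurd h2 (Nat.not_le.mpr (Nat.mul_pos h1 h1))
  | succ n ih =>
    intro w g x hN hw hg hx heq
    by_contra hcon
    have hwne := G.mem_ne_nil w hw
    have hgne := G.mem_ne_nil g hg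
    have hxpos : 1 ≤ x.length := List.length_pos_iff.mpr hx
    have hlg : g.length < w.length := by rw [heq, List.length_append]; omega
    have hneq : g ≠ w := fun h => by rw [h] at hlg; omega
    have hwg : G.lt w g := by
      rcases G.lt_total g w hg hw with h | h | h
      · exact absurd h hcon
      · exact absurd h hneq
      · exact h
    obtain ⟨xs, hxsm, hxsc, hxsf⟩ := NLAux.exists_fact G x hx
    have hxsne : xs ≠ [] := by rintro rfl; simp at hxsf; exact hx hxsf
    have hgla : G.lt g (xs.getLast hxsne) := by
      have := NLAux.lemA G hw (as := xs) (bs := [g]) hxsne (by simp) hxsm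
        (by intro f hf; simp at hf; rw [hf]; exact hg) hxsc (List.isChain_singleton g)
        (by rw [hxsf]; simp [heq])
      simpa using this
    have hlam : G.Mem (xs.getLast hxsne) := hxsm _ (List.getLast_mem hxsne)
    obtain ⟨xs', la, hxseq⟩ : ∃ xs' la, xs = xs' ++ [la] := by
      rcases List.eq_nil_or_concat xs with h | ⟨L, b, h⟩
      · exact absurd h hxsne
      · exact ⟨L, b, by rw [h, List.concat_eq_append]⟩
    subst hxseq
    have hlaeq : ((xs' ++ [la]).getLast hxsne) = la := by simp
    rw [hlaeq] at hgla hlam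
    have hxflat : x = xs'.flatten ++ la := by rw [← hxsf]; simp
    rcases eq_or_ne xs' [] with rfl | hxs'
    · have hxla : x = la := by simpa using hxflat
      have hmx : G.Mem x := by rw [hxla]; exact hlam
      have h1 : G.lt x w := by
        have := G.append_lt x g hmx hg (by rw [← heq]; exact hw)
        rw [← heq] at this; exact this
      have h2 : G.lt g x := by rw [hxla]; exact hgla
      exact G.lt_irrefl x hmx
        (G.lt_trans x g x hmx hg hmx (G.lt_trans x w g hmx hw hg h1 hwg) h2)
    · have hxs'f : xs'.flatten ≠ [] :=
        NLAux.flatten_ne_nil hxs' (fun f hf => G.mem_ne_nil f (hxsm f (List.mem_append_left _ hf)))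
      have hxs'pos : 1 ≤ xs'.flatten.length := List.length_pos_iff.mpr hxs'f
      have hlapos : 1 ≤ la.length := List.length_pos_iff.mpr (G.mem_ne_nil la hlam)
      have hgpos : 1 ≤ g.length := List.length_pos_iff.mpr hgne
      have hweq : w = xs'.flatten ++ (la ++ g) := by rw [heq, hxflat, List.append_assoc]
      have hvlt : (la ++ g).length < w.length := by
        rw [hweq]; simp only [List.length_append]; omega
      by_cases hv : G.Mem (la ++ g)
      · have hlav : G.lt la (la ++ g) := G.append_lt la g hlam hg hv
        have hxs'c : Chain' G.le xs' := (List.isChain_append.mp hxsc).1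
        have hjl : G.le (xs'.getLast hxs') la := by
          apply (List.isChain_append.mp hxsc).2.2
          · simp [List.getLast?_eq_getLast hxs']
          · simp
        have hlbm : G.Mem (xs'.getLast hxs') :=
          hxsm _ (List.mem_append_left _ (List.getLast_mem hxs'))
        have contraA : ∀ hle : G.le (xs'.getLast hxs') (la ++ g), False := by
          intro hle
          apply NLAux.not_chain_concat G hw (l := xs' ++ [la ++ g])
          · simp only [List.length_append, List.length_cons, List.length_nil]
            have := List.length_pos_iff.mpr hxs'; omega
          · intro f hf
            rcases List.mem_append.mp hf with h | h
            · exact hxsm f (List.mem_append_left _ h)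
            · simp at h; rw [h]; exact hv
          · rw [List.flatten_append]; simp; exact hweq.symm
          · refine List.isChain_append.mpr ?_
            refine ⟨hxs'c, List.isChain_singleton _, ?_⟩
            intro x' hx' y' hy'
            rw [List.getLast?_eq_getLast hxs'] at hx'
            simp at hx' hy'
            rw [← hx', ← hy']; exact hle
        rcases G.lt_total (xs'.getLast hxs') (la ++ g) hlbm hv with h | h | h
        · exact contraA (Or.inr h)
        · exact contraA (Or.inl h)
        · rcases hjl with heq' | hlt'
          · rw [heq'] at h
            exact G.lt_irrefl la hlam (G.lt_trans la (la ++ g) la hlam hv hlam hlav h)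
          · have : G.lt (la ++ g) la := G.lt_trans _ _ _ hv hlbm hlam h hlt'
            exact G.lt_irrefl la hlam (G.lt_trans la (la ++ g) la hlam hv hlam hlav this)
      · have h2v : 2 ≤ (la ++ g).length := by simp only [List.length_append]; omega
        have hex : ∃ hs : List (List A), 2 ≤ hs.length ∧ (∀ f ∈ hs, G.Mem f) ∧
            hs.Chain' (fun u v => u = v ∨ G.lt u v) ∧ hs.flatten = la ++ g := by
          by_contra hno; exact hv ((G.mem_iff _ h2v).mpr hno)
        obtain ⟨hs, hslen, hsmem, hsch0, hsflat⟩ := hex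
        have hsch : Chain' G.le hs := hsch0
        obtain ⟨l₁, h', l₂, p, s', hhs, hh', hp, hgdec, hladec⟩ :=
          NLAux.suffix_decomp hs la g (G.mem_ne_nil la hlam) hsflat.symm
        have hh'm : G.Mem h' := hsmem h' (by rw [hhs]; simp)
        have hh'lt : h'.length < w.length := by
          have hlen2 : (la ++ g).length =
              l₁.flatten.length + h'.length + l₂.flatten.length := by
            rw [← hsflat, hhs]; simp [List.length_append]; omega
          omega
        have hchl2 : Chain' G.le (h' :: l₂) := hsch.suffix ⟨l₁, by rw [hhs]⟩
        by_cases hs'nil : s' = []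
        · subst hs'nil
          simp only [List.append_nil] at hh'
          simp only [List.nil_append] at hgdec
          rcases l₂ with _ | ⟨b, l₂'⟩
          · simp at hgdec; exact hgne hgdec
          · rcases l₂' with _ | ⟨c, l₂''⟩
            · have hgb : g = b := by simpa using hgdec
              have hjun : G.le h' b := (List.isChain_cons_cons.mp hchl2).1
              rcases eq_or_ne l₁ [] with rfl | hl₁
              · have hlah : la = h' := by simp at hladec; rw [hladec, hh']
                have hle : G.le la g := by rw [hlah, hgb]; exact hjun
                exact NLAux.le_lt_false G hlam hg hle hgla
              · apply NLAux.not_chain_concat G hlam (l := l₁ ++ [h'])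
                · simp only [List.length_append, List.length_cons, List.length_nil]
                  have := List.length_pos_iff.mpr hl₁; omega
                · intro f hf
                  rcases List.mem_append.mp hf with h | h
                  · exact hsmem f (by rw [hhs]; exact List.mem_append_left _ h)
                  · simp at h; rw [h]; exact hh'm
                · simp [hladec, hh']
                · exact hsch.prefix ⟨[b], by rw [hhs]; simp⟩
            · apply NLAux.not_chain_concat G hg (l := b :: c :: l₂'')
              · simp
              · intro f hf; exact hsmem f (by rw [hhs]; simp at hf ⊢; tauto)
              · exact hgdec.symm
              · exact (List.isChain_cons_cons.mp hchl2).2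
        · rcases l₂ with _ | ⟨b, l₂'⟩
          · have hgs' : g = s' := by simpa using hgdec
            rw [← hgs'] at hh'
            have hlt1 : G.lt g h' :=
              ih h' g p (NLAux.meas1 hh'lt hlg hN) hh'm hg hp hh'
            have hwdec : w = (xs'.flatten ++ l₁.flatten) ++ h' := by
              rw [hweq, hladec, hh']; simp [List.append_assoc]
            have hne2 : xs'.flatten ++ l₁.flatten ≠ [] := by
              intro hcc; exact hxs'f (List.append_eq_nil_iff.mp hcc).1
            have hglt : g.length < h'.length := by
              rw [hh', List.length_append]
              have := List.length_pos_iff.mpr hp; omega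
            have hlt2 : G.lt h' w :=
              ih w h' _ (NLAux.meas2 hglt hh'lt hN) hw hh'm hne2 hwdec
            exact G.lt_irrefl h' hh'm
              (G.lt_trans h' g h' hh'm hg hh'm (G.lt_trans h' w g hh'm hw hg hlt2 hwg) hlt1)
          · obtain ⟨ss, ssm, ssc, ssf⟩ := NLAux.exists_fact G s' hs'nil
            have ssne : ss ≠ [] := by rintro rfl; simp at ssf; exact hs'nil ssf
            have hlsm : G.Mem (ss.getLast ssne) := ssm _ (List.getLast_mem ssne)
            have hbm : G.Mem b := hsmem b (by rw [hhs]; simp)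
            have hl2mem : ∀ f ∈ b :: l₂', G.Mem f := fun f hf =>
              hsmem f (by rw [hhs]; simp at hf ⊢; tauto)
            have hl2ch : Chain' G.le (b :: l₂') := (List.isChain_cons_cons.mp hchl2).2
            have hbls : G.lt b (ss.getLast ssne) := by
              have := NLAux.lemA G hg (as := ss) (bs := b :: l₂') ssne (by simp) ssm hl2mem ssc hl2ch
                (by rw [ssf]; exact hgdec.symm)
              simpa using this
            have hlssfx : (ss.getLast ssne) <:+ s' := by
              rw [← ssf]; exact NLAux.getLast_suffix_flatten ss ssne
            obtain ⟨y, hy⟩ := hlssfx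
            have hlth' : G.lt (ss.getLast ssne) h' :=
              ih h' (ss.getLast ssne) (p ++ y) (NLAux.meas1 hh'lt hlg hN) hh'm hlsm
                (fun hcc => hp (List.append_eq_nil_iff.mp hcc).1)
                (by rw [hh', ← hy, List.append_assoc])
            have hjun : G.le h' b := (List.isChain_cons_cons.mp hchl2).1
            exact NLAux.le_lt_false G hh'm hbm hjun
              (G.lt_trans b (ss.getLast ssne) h' hbm hlsm hh'm hbls hlth')

end NLAux2
section NLAux3
set_option linter.unusedSectionVars false
set_option maxHeartbeats 1000000

open List

variable {A : Type*} [LinearOrder A] (G : NyldonLike A)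

lemma NLAux.fact_nil {fs : List (List A)} {w : List A} (h : G.IsFactorization fs w)
    (hw : w = []) : fs = [] := by
  obtain ⟨hm, _, hf⟩ := h
  by_contra hne
  exact NLAux.flatten_ne_nil hne (fun f hf' => G.mem_ne_nil f (hm f hf')) (hf.trans hw)

lemma NLAux.no_strict (w : List A) (fs' : List (List A)) (f : List A)
    (gs' : List (List A)) (g : List A)
    (hf : G.IsFactorization (fs' ++ [f]) w) (hg : G.IsFactorization (gs' ++ [g]) w)
    (hlen : f.length < g.length) : False := by
  obtain ⟨hfm, hfc, hff⟩ := hf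
  obtain ⟨hgm, hgc, hgf⟩ := hg
  have hgmem : G.Mem g := hgm g (by simp)
  have hfmem : G.Mem f := hfm f (by simp)
  have hw1 : fs'.flatten ++ f = w := by rw [← hff]; simp
  have hw2 : gs'.flatten ++ g = w := by rw [← hgf]; simp
  by_cases hgs : gs'.flatten = []
  · have hwg : w = g := by rw [← hw2, hgs]; simp
    have hfs'ne : fs' ≠ [] := by
      rintro rfl; simp at hw1; rw [hw1, hwg] at hlen; omega
    apply NLAux.not_chain_concat G (show G.Mem w by rw [hwg]; exact hgmem)
      (l := fs' ++ [f]) ?_ hfm hff hfc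
    simp only [List.length_append, List.length_cons, List.length_nil]
    have := List.length_pos_iff.mpr hfs'ne; omega
  · obtain ⟨l₁, h', l₂, p, s', hhs, hh', hp, hgdec, hxeq⟩ :=
      NLAux.suffix_decomp (fs' ++ [f]) gs'.flatten g hgs (by rw [hw2, hff])
    have hh'm : G.Mem h' := hfm h' (by rw [hhs]; simp)
    rcases l₂ with _ | ⟨b, l₂'⟩
    · have hcat : l₁ ++ [h'] = fs' ++ [f] := hhs.symm
      have hh'f : h' = f := by
        have := congrArg List.getLast? hcat
        simpa [List.getLast?_concat] using this
      have : g.length = s'.length := by rw [hgdec]; simp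
      have : f.length = p.length + s'.length := by rw [← hh'f, hh', List.length_append]
      have := List.length_pos_iff.mpr hp
      omega
    · have hchl2 : Chain' G.le (h' :: b :: l₂') := hfc.suffix ⟨l₁, by rw [hhs]⟩
      by_cases hs'nil : s' = []
      · subst hs'nil
        simp only [List.nil_append] at hgdec
        rcases l₂' with _ | ⟨c, l₂''⟩
        · have hgb : g = b := by simpa using hgdec
          have hbf : b = f := by
            have hcat : (l₁ ++ [h']) ++ [b] = fs' ++ [f] := by rw [hhs]; simp
            have := congrArg List.getLast? hcat
            simpa [List.getLast?_concat] using this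
          rw [hgb, hbf] at hlen; omega
        · apply NLAux.not_chain_concat G hgmem (l := b :: c :: l₂'') ?_ ?_ hgdec.symm
            ((List.isChain_cons_cons.mp hchl2).2)
          · simp
          · intro f' hf'; exact hfm f' (by rw [hhs]; simp at hf' ⊢; tauto)
      · obtain ⟨ss, ssm, ssc, ssf⟩ := NLAux.exists_fact G s' hs'nil
        have ssne : ss ≠ [] := by rintro rfl; simp at ssf; exact hs'nil ssf
        have hlsm : G.Mem (ss.getLast ssne) := ssm _ (List.getLast_mem ssne)
        have hbm : G.Mem b := hfm b (by rw [hhs]; simp)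
        have hl2mem : ∀ f' ∈ b :: l₂', G.Mem f' := fun f' hf' =>
          hfm f' (by rw [hhs]; simp at hf' ⊢; tauto)
        have hl2ch : Chain' G.le (b :: l₂') := (List.isChain_cons_cons.mp hchl2).2
        have hbls : G.lt b (ss.getLast ssne) := by
          have := NLAux.lemA G hgmem (as := ss) (bs := b :: l₂') ssne (by simp) ssm hl2mem
            ssc hl2ch (by rw [ssf]; exact hgdec.symm)
          simpa using this
        have hlssfx : (ss.getLast ssne) <:+ s' := by
          rw [← ssf]; exact NLAux.getLast_suffix_flatten ss ssne
        obtain ⟨y, hy⟩ := hlssfx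
        have hlth' : G.lt (ss.getLast ssne) h' :=
          NLAux.cstar G (h'.length * h'.length + (h'.length - (ss.getLast ssne).length))
            h' (ss.getLast ssne) (p ++ y) le_rfl hh'm hlsm
            (fun hcc => hp (List.append_eq_nil_iff.mp hcc).1)
            (by rw [hh', ← hy, List.append_assoc])
        have hjun : G.le h' b := (List.isChain_cons_cons.mp hchl2).1
        exact NLAux.le_lt_false G hh'm hbm hjun
          (G.lt_trans b (ss.getLast ssne) h' hbm hlsm hh'm hbls hlth')

lemma NLAux.uniq : ∀ (N : ℕ) (w : List A), w.length ≤ N → ∀ fs gs,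
    G.IsFactorization fs w → G.IsFactorization gs w → fs = gs := by
  intro N
  induction N with
  | zero =>
    intro w hw fs gs hf hg
    have hwnil : w = [] := by
      rw [← List.length_eq_zero_iff]; omega
    rw [NLAux.fact_nil G hf hwnil, NLAux.fact_nil G hg hwnil]
  | succ n ih =>
    intro w hw fs gs hf hg
    by_cases hwnil : w = []
    · rw [NLAux.fact_nil G hf hwnil, NLAux.fact_nil G hg hwnil]
    · have hfsne : fs ≠ [] := by
        rintro rfl; exact hwnil (hf.2.2.symm.trans rfl)
      have hgsne : gs ≠ [] := by
        rintro rfl; exact hwnil (hg.2.2.symm.trans rfl)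
      obtain ⟨fs', f, rfl⟩ : ∃ fs' f, fs = fs' ++ [f] := by
        rcases List.eq_nil_or_concat fs with h | ⟨L, b, h⟩
        · exact absurd h hfsne
        · exact ⟨L, b, by rw [h, List.concat_eq_append]⟩
      obtain ⟨gs', g, rfl⟩ : ∃ gs' g, gs = gs' ++ [g] := by
        rcases List.eq_nil_or_concat gs with h | ⟨L, b, h⟩
        · exact absurd h hgsne
        · exact ⟨L, b, by rw [h, List.concat_eq_append]⟩
      rcases lt_trichotomy f.length g.length with h | h | h
      · exact (NLAux.no_strict G w fs' f gs' g hf hg h).elim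
      · obtain ⟨hfm, hfc, hff⟩ := hf
        obtain ⟨hgm, hgc, hgf⟩ := hg
        have hw1 : fs'.flatten ++ f = w := by rw [← hff]; simp
        have hw2 : gs'.flatten ++ g = w := by rw [← hgf]; simp
        obtain ⟨he, rfl⟩ : fs'.flatten = gs'.flatten ∧ f = g :=
          List.append_inj' (hw1.trans hw2.symm) h
        have hfpos : 1 ≤ f.length := List.length_pos_iff.mpr (G.mem_ne_nil f (hfm f (by simp)))
        have hwlen : w.length = fs'.flatten.length + f.length := by
          rw [← hw1, List.length_append]
        have hrec := ih fs'.flatten (by omega) fs' gs'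
          ⟨fun f' hf' => hfm f' (List.mem_append_left _ hf'),
            (List.isChain_append.mp hfc).1, rfl⟩
          ⟨fun f' hf' => hgm f' (List.mem_append_left _ hf'),
            (List.isChain_append.mp hgc).1, he.symm⟩
        rw [hrec]
      · exact (NLAux.no_strict G w gs' g fs' f hg hf h).elim

end NLAux3
/-- For any Nyldon-like set `(G, ≺)`, every nonempty word has exactly one
`G`-factorization. -/
theorem stmt_7 {A : Type*} [LinearOrder A] [Fintype A] (hA : 2 ≤ Fintype.card A)
    (G : NyldonLike A) (w : List A) (hw : w ≠ []) :
    ∃! fs : List (List A), G.IsFactorization fs w := by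
  obtain ⟨fs, hfs⟩ := NLAux.exists_fact G w hw
  exact ⟨fs, hfs, fun gs hgs => NLAux.uniq G w.length w le_rfl gs fs hgs hfs⟩
end
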